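/- Assume the continuum hypothesis (2^{ℵ0} = ℵ1). Then the partial order P2 satisfies the ω2-chain condition: every antichain in P2 has cardinality at most ℵ1. -/

import Mathlib

open Cardinal

/-- A condition in the partial order `P2`: a partial function from `ω₃ × ω₁` to `{0,1}` with
countable domain, represented as a total function into `Option Bool` whose support (the set
where the value is not `none`) is countable. -/
structure P2Cond (O1 O3 : Type*) where
  toFun : O3 × O1 → Option Bool
  countable_dom : { x | toFun x ≠ none }.Countable

/-- The order on `P2` is reverse extension: `f ≤ g` iff `f` extends `g`. -/
def P2Le {O1 O3 : Type*} (f g : P2Cond O1 O3) : Prop :=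
  ∀ x, g.toFun x ≠ none → f.toFun x = g.toFun x

section

open Ordinal Set

universe u

namespace CCCAux

noncomputable def tpi (ξ : Ordinal.{u}) (i : ξ.ToType) : Ordinal.{u} :=
  @Ordinal.typein ξ.ToType (· < ·) isWellOrder_lt i

lemma tpi_lt {ξ : Ordinal.{u}} (i : ξ.ToType) : tpi ξ i < ξ :=
  Ordinal.typein_lt_self i

noncomputable def enu (ξ : Ordinal.{u}) (η : Ordinal.{u}) (h : η < ξ) : ξ.ToType :=
  @Ordinal.enum ξ.ToType (· < ·) isWellOrder_lt ⟨η, by rwa [type_toType]⟩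

lemma tpi_enu {ξ η : Ordinal.{u}} (h : η < ξ) : tpi ξ (enu ξ η h) = η :=
  @Ordinal.typein_enum ξ.ToType (· < ·) isWellOrder_lt η (by rwa [type_toType])

variable {ι W : Type u}

/-- support of a partial function -/
def spt (g : ι → Option Bool) : Set ι := {x | g x ≠ none}

open Classical in
/-- restriction of a partial function to a set -/
noncomputable def restr (X : Set ι) (g : ι → Option Bool) : ι → Option Bool :=
  fun x => if x ∈ X then g x else none

/-- partial functions with countable support inside `X` -/
def RX (X : Set ι) : Set (ι → Option Bool) := {q | spt q ⊆ X ∧ (spt q).Countable}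

open Classical in
noncomputable def wit [Nonempty W] (f : W → ι → Option Bool) (X : Set ι)
    (q : ι → Option Bool) : W :=
  if h : ∃ β : W, restr X (f β) = q then h.choose else Classical.arbitrary W

noncomputable def stepSet [Nonempty W] (f : W → ι → Option Bool) (X : Set ι) : Set ι :=
  X ∪ ⋃ q ∈ RX X, spt (f (wit f X q))

noncomputable def TT [Nonempty W] (f : W → ι → Option Bool) (ξ : Ordinal.{u}) : Set ι :=
  ⋃ i : ξ.ToType, stepSet f (TT f (tpi ξ i))
termination_by ξ
decreasing_by exact tpi_lt i

variable [Nonempty W] {f : W → ι → Option Bool}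

lemma TT_def (f : W → ι → Option Bool) (ξ : Ordinal.{u}) :
    TT f ξ = ⋃ i : ξ.ToType, stepSet f (TT f (tpi ξ i)) := by
  rw [TT]

lemma step_subset_TT {η ξ : Ordinal.{u}} (h : η < ξ) :
    stepSet f (TT f η) ⊆ TT f ξ := by
  rw [TT_def f ξ]
  intro x hx
  refine Set.mem_iUnion.2 ⟨enu ξ η h, ?_⟩
  rwa [tpi_enu]

lemma subset_stepSet (X : Set ι) : X ⊆ stepSet f X := Set.subset_union_left

lemma mem_TT {x : ι} {ξ : Ordinal.{u}} :
    x ∈ TT f ξ ↔ ∃ η < ξ, x ∈ stepSet f (TT f η) := by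
  constructor
  · intro hx
    rw [TT_def] at hx
    obtain ⟨i, hi⟩ := Set.mem_iUnion.1 hx
    exact ⟨_, tpi_lt i, hi⟩
  · rintro ⟨η, hη, hx⟩
    exact step_subset_TT hη hx


lemma ciSup_le_card {κ : Type v} (g : κ → Cardinal.{w}) {a : Cardinal.{w}}
    (h : ∀ i, g i ≤ a) : ⨆ i, g i ≤ a := by
  cases isEmpty_or_nonempty κ
  · simp [ciSup_of_empty]
  · exact ciSup_le' h

lemma aleph1_power_aleph0 (hCH : (2 : Cardinal.{u}) ^ aleph0 = aleph 1) :
    (aleph 1 : Cardinal.{u}) ^ aleph0 = aleph 1 := by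
  rw [← hCH, ← power_mul, aleph0_mul_aleph0]

lemma card_RX (hCH : (2 : Cardinal.{u}) ^ aleph0 = aleph 1) {X : Set ι}
    (hX : #X ≤ aleph 1) : #(RX X) ≤ aleph 1 := by
  classical
  let Φ : Option (ℕ → X × Bool) → (ι → Option Bool) := fun o =>
    match o with
    | none => fun _ => none
    | some e => fun x => if h : ∃ n, ((e n).1 : ι) = x then some (e h.choose).2 else none
  have hsub : RX X ⊆ Set.range Φ := by
    rintro q ⟨hq1, hq2⟩
    rcases eq_empty_or_nonempty (spt q) with hs | hs
    · refine ⟨none, funext fun x => ?_⟩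
      show none = q x
      by_contra hne
      have : x ∈ spt q := Ne.symm hne
      simp [hs] at this
    · obtain ⟨f₀, hf₀⟩ := hq2.exists_eq_range hs
      have hmem : ∀ n, f₀ n ∈ spt q := fun n => hf₀ ▸ Set.mem_range_self n
      have hns : ∀ n, (q (f₀ n)).isSome := fun n => Option.ne_none_iff_isSome.1 (hmem n)
      refine ⟨some (fun n => (⟨f₀ n, hq1 (hmem n)⟩, (q (f₀ n)).get (hns n))), funext fun x => ?_⟩
      show (if h : ∃ n, f₀ n = x then _ else none) = q x
      split_ifs with h
      · have hx : f₀ h.choose = x := h.choose_spec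
        show some ((q (f₀ h.choose)).get (hns h.choose)) = q x
        rw [Option.some_get, hx]
      · by_contra hne
        have : x ∈ spt q := fun hqx => hne (by rw [hqx])
        rw [hf₀] at this
        obtain ⟨n, hn⟩ := this
        exact h ⟨n, hn⟩
  have h1 : #(RX X) ≤ #(Option (ℕ → X × Bool)) :=
    (mk_le_mk_of_subset hsub).trans mk_range_le
  refine h1.trans ?_
  rw [mk_option]
  have hXB : #(X × Bool) ≤ aleph 1 := by
    rw [mk_prod, mk_bool, Cardinal.lift_uzero, Cardinal.lift_ofNat]
    calc #X * 2 ≤ aleph 1 * aleph 1 :=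
          mul_le_mul' hX (le_trans (by exact_mod_cast (nat_lt_aleph0 2).le) (aleph0_le_aleph 1))
      _ = aleph 1 := mul_eq_self (aleph0_le_aleph 1)
  have h2 : #(ℕ → X × Bool) ≤ aleph 1 := by
    rw [mk_arrow, Cardinal.lift_uzero, mk_nat, Cardinal.lift_aleph0]
    calc #(X × Bool) ^ (ℵ₀ : Cardinal.{u}) ≤ aleph 1 ^ (ℵ₀ : Cardinal.{u}) :=
          power_le_power_right hXB
      _ = aleph 1 := aleph1_power_aleph0 hCH
  calc #(ℕ → X × Bool) + 1 ≤ aleph 1 + aleph 1 := by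
        refine add_le_add h2 (le_trans ?_ (aleph0_le_aleph 1))
        exact one_le_aleph0
    _ = aleph 1 := add_eq_self (aleph0_le_aleph 1)


lemma card_step (hCH : (2 : Cardinal.{u}) ^ aleph0 = aleph 1)
    (hcnt : ∀ α : W, (spt (f α)).Countable) {X : Set ι}
    (hX : #X ≤ aleph 1) : #(stepSet f X) ≤ aleph 1 := by
  refine le_trans (mk_union_le _ _) ?_
  have hB : #(⋃ q ∈ RX X, spt (f (wit f X q))) ≤ aleph 1 := by
    refine le_trans (mk_biUnion_le _ _) ?_
    have h1 : #(RX X) ≤ aleph 1 := card_RX hCH hX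
    have h2 : (⨆ q : RX X, #(spt (f (wit f X q.1)))) ≤ aleph 1 := by
      refine ciSup_le_card _ fun q => ?_
      exact le_trans (mk_le_aleph0_iff.2 (hcnt _).to_subtype) (aleph0_le_aleph 1)
    calc #(RX X) * ⨆ q : RX X, #(spt (f (wit f X q.1)))
        ≤ aleph 1 * aleph 1 := mul_le_mul' h1 h2
      _ = aleph 1 := mul_eq_self (aleph0_le_aleph 1)
  calc #X + #(⋃ q ∈ RX X, spt (f (wit f X q))) ≤ aleph 1 + aleph 1 := add_le_add hX hB
    _ = aleph 1 := add_eq_self (aleph0_le_aleph 1)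

lemma card_TT (hCH : (2 : Cardinal.{u}) ^ aleph0 = aleph 1)
    (hcnt : ∀ α : W, (spt (f α)).Countable) :
    ∀ ξ : Ordinal.{u}, ξ ≤ (aleph 1).ord → #(TT f ξ) ≤ aleph 1 := by
  intro ξ
  induction ξ using Ordinal.induction with
  | h ξ IH =>
    intro hξ
    rw [TT_def f ξ]
    refine le_trans (mk_iUnion_le _) ?_
    have hidx : #ξ.ToType ≤ aleph 1 := by
      rw [mk_toType]
      calc ξ.card ≤ ((aleph 1).ord).card := Ordinal.card_le_card hξ
        _ = aleph 1 := card_ord _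
    have hsup : (⨆ i : ξ.ToType, #(stepSet f (TT f (tpi ξ i)))) ≤ aleph 1 := by
      refine ciSup_le_card _ fun i => ?_
      refine card_step hCH hcnt ?_
      exact IH _ (tpi_lt i) ((tpi_lt i).le.trans hξ)
    calc #ξ.ToType * ⨆ i : ξ.ToType, #(stepSet f (TT f (tpi ξ i)))
        ≤ aleph 1 * aleph 1 := mul_le_mul' hidx hsup
      _ = aleph 1 := mul_eq_self (aleph0_le_aleph 1)


lemma restr_eq_of_mem {X : Set ι} {g : ι → Option Bool} {x : ι} (h : x ∈ X) :
    restr X g x = g x := by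
  unfold restr
  rw [if_pos h]

lemma restr_eq_of_not_mem {X : Set ι} {g : ι → Option Bool} {x : ι} (h : x ∉ X) :
    restr X g x = none := by
  unfold restr
  rw [if_neg h]

lemma spt_restr_subset {X : Set ι} {g : ι → Option Bool} :
    spt (restr X g) ⊆ X ∩ spt g := by
  intro x hx
  by_cases h : x ∈ X
  · refine ⟨h, ?_⟩
    have := restr_eq_of_mem (g := g) h
    exact fun hg => hx (by rw [this, hg] : restr X g x = none)
  · exact absurd (restr_eq_of_not_mem h) hx

lemma CH_transfer (h : (2 : Cardinal.{u}) ^ aleph0 = aleph 1) :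
    (2 : Cardinal.{v}) ^ aleph0 = aleph 1 := by
  have h1 : Cardinal.lift.{v} ((2 : Cardinal.{u}) ^ aleph0) = Cardinal.lift.{v} (aleph 1) := by
    rw [h]
  rw [lift_power, lift_aleph0, Cardinal.lift_ofNat, lift_aleph, Ordinal.lift_one] at h1
  have h2 : Cardinal.lift.{u} ((2 : Cardinal.{v}) ^ aleph0) =
      Cardinal.lift.{u} ((aleph 1 : Cardinal.{v})) := by
    rw [lift_power, lift_aleph0, Cardinal.lift_ofNat, lift_aleph, Ordinal.lift_one]
    exact h1
  exact Cardinal.lift_inj.1 h2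

lemma exists_agree {ι W : Type u} (hCH : (2 : Cardinal.{u}) ^ aleph0 = aleph 1)
    (hW : aleph 1 < #W) (f : W → ι → Option Bool)
    (hcnt : ∀ α : W, (spt (f α)).Countable) :
    ∃ α β : W, α ≠ β ∧ ∀ x, f α x ≠ none → f β x ≠ none → f α x = f β x := by
  have hne : Nonempty W := by
    refine Cardinal.mk_ne_zero_iff.1 ?_
    have h0 : (0 : Cardinal.{u}) < #W :=
      lt_trans (aleph0_pos.trans_le (aleph0_le_aleph 1)) hW
    exact h0.ne'
  set O : Ordinal.{u} := (aleph 1).ord with hO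
  set C : Set W := ⋃ i : O.ToType, wit f (TT f (tpi O i)) '' (RX (TT f (tpi O i))) with hCdef
  have hC : #C ≤ aleph 1 := by
    refine le_trans (mk_iUnion_le _) ?_
    have hidx : #O.ToType ≤ aleph 1 := by rw [mk_toType, hO, card_ord]
    have hsup : (⨆ i : O.ToType, #(wit f (TT f (tpi O i)) '' RX (TT f (tpi O i)))) ≤ aleph 1 := by
      refine ciSup_le_card _ fun i => ?_
      exact le_trans mk_image_le (card_RX hCH (card_TT hCH hcnt _ (tpi_lt i).le))
    calc #O.ToType * ⨆ i : O.ToType, #(wit f (TT f (tpi O i)) '' RX (TT f (tpi O i)))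
        ≤ aleph 1 * aleph 1 := mul_le_mul' hidx hsup
      _ = aleph 1 := mul_eq_self (aleph0_le_aleph 1)
  have hex : ∃ α : W, α ∉ C := by
    by_contra h
    push_neg at h
    have h1 : (Set.univ : Set W) ⊆ C := fun w _ => h w
    have h2 := mk_le_mk_of_subset h1
    rw [mk_univ] at h2
    exact absurd (h2.trans hC) (not_le.2 hW)
  obtain ⟨a, ha⟩ := hex
  have hScnt : (spt (f a)).Countable := hcnt a
  have hstage : ∀ x : ↥(spt (f a) ∩ TT f O), ∃ η, η < O ∧ (x : ι) ∈ stepSet f (TT f η) := by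
    intro x
    obtain ⟨η, hη, hx⟩ := mem_TT.1 x.2.2
    exact ⟨η, hη, hx⟩
  choose g hg1 hg2 using hstage
  have hsupg : (⨆ x, g x) < O := by
    refine Ordinal.iSup_lt_ord ?_ hg1
    rw [hO, Cardinal.isRegular_aleph_one.cof_eq]
    refine lt_of_le_of_lt ?_ aleph0_lt_aleph_one
    exact mk_le_aleph0_iff.2 (hScnt.mono Set.inter_subset_left).to_subtype
  have hζ : Order.succ (⨆ x, g x) < O := by
    refine (Cardinal.isSuccLimit_ord (aleph0_le_aleph 1)).succ_lt ?_
    rw [← hO]; exact hsupg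
  set ζ := Order.succ (⨆ x, g x) with hζdef
  have hsub : spt (f a) ∩ TT f O ⊆ TT f ζ := by
    intro x hx
    have hlt : g ⟨x, hx⟩ < ζ :=
      lt_of_le_of_lt (Ordinal.le_iSup g ⟨x, hx⟩) (Order.lt_succ _)
    exact step_subset_TT hlt (hg2 ⟨x, hx⟩)
  have hq : restr (TT f ζ) (f a) ∈ RX (TT f ζ) := by
    constructor
    · exact fun x hx => (spt_restr_subset hx).1
    · exact hScnt.mono (fun x hx => (spt_restr_subset hx).2)
  have hexw : ∃ β : W, restr (TT f ζ) (f β) = restr (TT f ζ) (f a) := ⟨a, rfl⟩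
  have hwit : restr (TT f ζ) (f (wit f (TT f ζ) (restr (TT f ζ) (f a)))) =
      restr (TT f ζ) (f a) := by
    rw [wit, dif_pos hexw]
    exact hexw.choose_spec
  set β := wit f (TT f ζ) (restr (TT f ζ) (f a)) with hβdef
  have hβC : β ∈ C := by
    rw [hCdef]
    refine Set.mem_iUnion.2 ⟨enu O ζ hζ, ?_⟩
    rw [tpi_enu hζ]
    exact ⟨restr (TT f ζ) (f a), hq, rfl⟩
  have hab : a ≠ β := fun h => ha (h ▸ hβC)
  refine ⟨a, β, hab, ?_⟩
  intro x hax hbx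
  have hsptβ : spt (f β) ⊆ stepSet f (TT f ζ) := by
    intro y hy
    exact Set.mem_union_right _ (Set.mem_biUnion hq hy)
  have hxT : x ∈ TT f ζ := hsub ⟨hax, step_subset_TT hζ (hsptβ hbx)⟩
  have e := congrFun hwit x
  rw [restr_eq_of_mem hxT, restr_eq_of_mem hxT] at e
  exact e.symm

end CCCAux

end

/-- Under CH, `P2` satisfies the `ω₂`-chain condition: every antichain has cardinality at most
`ℵ₁`. Here `ω₁` and `ω₃` are realized as the canonical types of the ordinals `(ℵ₁).ord` and
`(ℵ₃).ord`. -/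
theorem stmt10 (hCH : (2 : Cardinal) ^ Cardinal.aleph0 = Cardinal.aleph 1)
    (A : Set (P2Cond (Cardinal.aleph 1).ord.ToType (Cardinal.aleph 3).ord.ToType))
    (hA : ∀ f ∈ A, ∀ g ∈ A, f ≠ g → ¬ ∃ h, P2Le h f ∧ P2Le h g) :
    #A ≤ Cardinal.aleph 1 := by
  classical
  by_contra hA'
  push_neg at hA'
  obtain ⟨α, β, hne, hagree⟩ := CCCAux.exists_agree (CCCAux.CH_transfer hCH) hA'
    (fun a : ↥A => a.1.toFun) (fun a : ↥A => a.1.countable_dom)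
  have hcnt : {x | (if (α.1).toFun x = none then (β.1).toFun x else (α.1).toFun x) ≠ none}.Countable := by
    refine ((α.1.countable_dom).union (β.1.countable_dom)).mono ?_
    intro x hx
    simp only [Set.mem_setOf_eq] at hx
    by_cases h1 : α.1.toFun x = none
    · rw [if_pos h1] at hx
      exact Or.inr hx
    · exact Or.inl h1
  refine hA α.1 α.2 β.1 β.2 (fun hh => hne (Subtype.ext hh))
    ⟨⟨fun x => if (α.1).toFun x = none then (β.1).toFun x else (α.1).toFun x, hcnt⟩, ?_, ?_⟩
  · intro x hx
    simp only
    rw [if_neg hx]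
  · intro x hx
    by_cases h1 : α.1.toFun x = none
    · simp only
      rw [if_pos h1]
    · simp only
      rw [if_neg h1]
      exact hagree x h1 hx
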